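/- Let (L, •, N) be an irreducible NIM-rep of the Jordan–Larson fusion ring R_{p,G} whose G-action has at least two orbits, and let k ∈ {1,…,p−1} with gcd(k, p) = 1. Then X_k cannot fix any orbit: N_k(ℓ, ℓ') = 0 whenever ℓ and ℓ' lie in the same G-orbit of L. -/

import Mathlib

open scoped BigOperators

/-- A NIM-rep of the Jordan–Larson fusion ring `R_{p,G}`: a finite set `L` with a
`G`-action together with multiplicity functions `N k : L → L → ℕ` for `1 ≤ k ≤ p-1`
(indices read modulo `p`), satisfying the axioms coming from the fusion rules. -/
structure JLNimRep (p : ℕ) (G : Type*) [Group G] [Fintype G]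
    (L : Type*) [Fintype L] [MulAction G L] where
  N : ℕ → L → L → ℕ
  smul_left : ∀ (k : ℕ), 1 ≤ k → k ≤ p - 1 → ∀ (g : G) (ℓ ℓ' : L),
    N k (g • ℓ) ℓ' = N k ℓ ℓ'
  smul_right : ∀ (k : ℕ), 1 ≤ k → k ≤ p - 1 → ∀ (g : G) (ℓ ℓ' : L),
    N k ℓ (g • ℓ') = N k ℓ ℓ'
  dual_symm : ∀ (k : ℕ), 1 ≤ k → k ≤ p - 1 → ∀ (ℓ ℓ' : L),
    N k ℓ ℓ' = N (p - k) ℓ' ℓ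
  fusion : ∀ (i j : ℕ), 1 ≤ i → i ≤ p - 1 → 1 ≤ j → j ≤ p - 1 → (i + j) % p ≠ 0 →
    ∀ (ℓ ℓ' : L), ∑ t : L, N j ℓ t * N i t ℓ' =
      Nat.sqrt (Fintype.card G) * N ((i + j) % p) ℓ ℓ'
  fusion_dual : ∀ (i : ℕ), 1 ≤ i → i ≤ p - 1 → ∀ (ℓ ℓ' : L),
    ∑ t : L, N i ℓ t * N (p - i) t ℓ' = Nat.card {g : G // g • ℓ = ℓ'}

/-- Irreducibility of a NIM-rep: the only nonempty subset closed under the `G`-action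
and under the supports of all `N k` (`1 ≤ k ≤ p-1`) is the whole set. -/
def JLNimRep.Irreducible {p : ℕ} {G : Type*} [Group G] [Fintype G]
    {L : Type*} [Fintype L] [MulAction G L] (M : JLNimRep p G L) : Prop :=
  ∀ S : Set L, S.Nonempty →
    (∀ (g : G) (ℓ : L), ℓ ∈ S → g • ℓ ∈ S) →
    (∀ (k : ℕ), 1 ≤ k → k ≤ p - 1 → ∀ (ℓ ℓ' : L), ℓ ∈ S → 0 < M.N k ℓ ℓ' → ℓ' ∈ S) →
    S = Set.univ

/-- in an irreducible NIM-rep of `R_{p,G}` with at least two `G`-orbits,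
`X_k` with `gcd(k,p) = 1` cannot fix any orbit. -/
theorem stmt1 (p : ℕ) (hp : 2 ≤ p) (G : Type*) [Group G] [Fintype G]
    (hG : IsSquare (Fintype.card G))
    (L : Type*) [Fintype L] [Nonempty L] [MulAction G L]
    (M : JLNimRep p G L) (hirr : M.Irreducible)
    (horb : ∃ a b : L, b ∉ MulAction.orbit G a)
    (k : ℕ) (hk1 : 1 ≤ k) (hk2 : k ≤ p - 1) (hkp : Nat.gcd k p = 1)
    (ℓ ℓ' : L) (hsame : ℓ' ∈ MulAction.orbit G ℓ) :
    M.N k ℓ ℓ' = 0 := by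
  by_contra hne
  have hpos : 0 < M.N k ℓ ℓ' := Nat.pos_of_ne_zero hne
  obtain ⟨g, rfl⟩ := hsame
  have hdiag : 0 < M.N k ℓ ℓ := by
    rwa [M.smul_right k hk1 hk2] at hpos
  have hsqrt : 0 < Nat.sqrt (Fintype.card G) := Nat.sqrt_pos.mpr Fintype.card_pos
  have hk_lt : k < p := by omega
  have hcop : Nat.Coprime p k := (Nat.coprime_comm.mp hkp)
  -- positivity of N ((c*k) % p) ℓ ℓ for 1 ≤ c ≤ p-1
  have key : ∀ c : ℕ, 1 ≤ c → c ≤ p - 1 → 0 < M.N ((c * k) % p) ℓ ℓ := by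
    intro c
    induction c with
    | zero => intro h; omega
    | succ n ih =>
      intro h1 h2
      rcases Nat.eq_zero_or_pos n with hn0 | hn0
      · subst hn0
        simpa [Nat.mod_eq_of_lt hk_lt] using hdiag
      · have hn2 : n ≤ p - 1 := by omega
        have ihn := ih hn0 hn2
        have hndvd : ¬ p ∣ n := by
          intro hdvd
          have := Nat.le_of_dvd hn0 hdvd
          omega
        have hn1dvd : ¬ p ∣ (n + 1) := by
          intro hdvd
          have := Nat.le_of_dvd (by omega) hdvd
          omega
        have hnk0 : (n * k) % p ≠ 0 := by
          intro h
          exact hndvd (hcop.dvd_of_dvd_mul_right (Nat.dvd_of_mod_eq_zero h))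
        have hn1k0 : ((n + 1) * k) % p ≠ 0 := by
          intro h
          exact hn1dvd (hcop.dvd_of_dvd_mul_right (Nat.dvd_of_mod_eq_zero h))
        have hmod : ((n * k) % p + k) % p = ((n + 1) * k) % p := by
          conv_rhs => rw [Nat.succ_mul, Nat.add_mod, Nat.mod_eq_of_lt hk_lt]
        have hfus := M.fusion ((n * k) % p) k
          (by omega) (by have := Nat.mod_lt (n * k) (show 0 < p by omega); omega)
          hk1 hk2 (by rw [hmod]; exact hn1k0) ℓ ℓ
        rw [hmod] at hfus
        have hterm : 0 < M.N k ℓ ℓ * M.N ((n * k) % p) ℓ ℓ := Nat.mul_pos hdiag ihn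
        have hsum : 0 < ∑ t : L, M.N k ℓ t * M.N ((n * k) % p) t ℓ :=
          lt_of_lt_of_le hterm
            (Finset.single_le_sum (f := fun t => M.N k ℓ t * M.N ((n * k) % p) t ℓ)
              (fun i _ => Nat.zero_le _) (Finset.mem_univ ℓ))
        rw [hfus] at hsum
        exact Nat.pos_of_mul_pos_left (by rwa [Nat.mul_comm] at hsum)
  -- positivity of N j ℓ ℓ for all 1 ≤ j ≤ p-1
  have allpos : ∀ j : ℕ, 1 ≤ j → j ≤ p - 1 → 0 < M.N j ℓ ℓ := by
    intro j hj1 hj2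
    haveI : NeZero p := ⟨by omega⟩
    set u := ZMod.unitOfCoprime k hkp with hu
    set c := ((j : ZMod p) * ((u⁻¹ : (ZMod p)ˣ) : ZMod p)).val with hc
    have hck : (c * k) % p = j := by
      have h1 : ((c * k : ℕ) : ZMod p) = (j : ZMod p) := by
        push_cast
        rw [hc, ZMod.natCast_val, ZMod.cast_id]
        have hku : (k : ZMod p) = (u : ZMod p) := (ZMod.coe_unitOfCoprime k hkp).symm
        rw [hku, mul_assoc]
        rw [← Units.val_mul, inv_mul_cancel, Units.val_one, mul_one]
      calc (c * k) % p = ((c * k : ℕ) : ZMod p).val := (ZMod.val_natCast _ _).symm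
        _ = (j : ZMod p).val := by rw [h1]
        _ = j := by rw [ZMod.val_natCast, Nat.mod_eq_of_lt (by omega)]
    have hc1 : 1 ≤ c := by
      rcases Nat.eq_zero_or_pos c with h | h
      · rw [h] at hck; simp at hck; omega
      · exact h
    have hclt : c < p := ZMod.val_lt _
    have := key c hc1 (by omega)
    rwa [hck] at this
  -- the orbit of ℓ is closed under all N supports
  have horbit_closed : ∀ m : ℕ, 1 ≤ m → m ≤ p - 1 → ∀ x t : L,
      x ∈ MulAction.orbit G ℓ → 0 < M.N m x t → t ∈ MulAction.orbit G ℓ := by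
    intro m hm1 hm2 x t hx hNt
    obtain ⟨g', rfl⟩ := hx
    rw [M.smul_left m hm1 hm2] at hNt
    have hfd := M.fusion_dual (p - m) (by omega) (by omega) ℓ t
    have hpm : p - (p - m) = m := by omega
    rw [hpm] at hfd
    have hterm : 0 < M.N (p - m) ℓ ℓ * M.N m ℓ t :=
      Nat.mul_pos (allpos (p - m) (by omega) (by omega)) hNt
    have hsum : 0 < ∑ s : L, M.N (p - m) ℓ s * M.N m s t :=
      lt_of_lt_of_le hterm
        (Finset.single_le_sum (f := fun s => M.N (p - m) ℓ s * M.N m s t)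
          (fun i _ => Nat.zero_le _) (Finset.mem_univ ℓ))
    rw [hfd] at hsum
    obtain ⟨⟨g'', hg''⟩⟩ := (Nat.card_pos_iff.mp hsum).1
    exact ⟨g'', hg''⟩
  -- irreducibility forces the orbit to be everything
  have hS : MulAction.orbit G ℓ = Set.univ :=
    hirr (MulAction.orbit G ℓ) ⟨ℓ, MulAction.mem_orbit_self ℓ⟩
      (fun g' x hx => by
        obtain ⟨h, rfl⟩ := hx
        exact ⟨g' * h, by simp [mul_smul]⟩)
      (fun m hm1 hm2 x t hx hNt => horbit_closed m hm1 hm2 x t hx hNt)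
  obtain ⟨a, b, hb⟩ := horb
  have ha : a ∈ MulAction.orbit G ℓ := hS ▸ Set.mem_univ a
  have hbmem : b ∈ MulAction.orbit G ℓ := hS ▸ Set.mem_univ b
  obtain ⟨g1, rfl⟩ := ha
  exact hb (by rwa [MulAction.orbit_smul])
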